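/- arXiv:2002.02016 — 3 statements merged into one kernel-verified Lean document; each statement's English description precedes it below -/
import Mathlib

section
/- (Grönwall-type lemma) Let C₁, C₂ > 0, let ψ, Θ : [0,∞) → [0,∞), and let φ : [0,∞) → [0,∞) be continuous with φ(0) = 0. Assume that for all t > 0, the upper-left-derivative of φ satisfies D⁻φ(t) ≤ C₁ φ(t) + C₂ + Θ(t)·𝟙{φ(t) < ψ(t)}. Then for any T > 0, sup_{t ∈ [0,T]} φ(t) ≤ (C₂ T + sup_{t ∈ [0,T]} ψ(t)) · e^{C₁ T}. -/
open Filter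

/-- The upper-left-derivative `D⁻φ(t) = limsup_{h ↓ 0} (φ(t) - φ(t-h))/h`, valued in `EReal`. -/
noncomputable def upperLeftDeriv (φ : ℝ → ℝ) (t : ℝ) : EReal :=
  Filter.limsup (fun h : ℝ => (((φ t - φ (t - h)) / h : ℝ) : EReal)) (nhdsWithin 0 (Set.Ioi 0))

open Set in
lemma limsup_lower_aux (φ w : ℝ → ℝ) (t₀ w' : ℝ) (hw : HasDerivAt w w' t₀)
    (hle : ∀ᶠ h in nhdsWithin (0:ℝ) (Set.Ioi 0),
      (w t₀ - w (t₀ - h)) / h ≤ (φ t₀ - φ (t₀ - h)) / h) :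
    (w' : EReal) ≤
      Filter.limsup (fun h : ℝ => (((φ t₀ - φ (t₀ - h)) / h : ℝ) : EReal))
        (nhdsWithin 0 (Set.Ioi 0)) := by
  have hmap : Tendsto (fun h : ℝ => t₀ - h) (nhdsWithin 0 (Set.Ioi 0)) (nhdsWithin t₀ {t₀}ᶜ) := by
    apply tendsto_nhdsWithin_of_tendsto_nhds_of_eventually_within
    · have : Tendsto (fun h : ℝ => t₀ - h) (nhds 0) (nhds (t₀ - 0)) :=
        (tendsto_const_nhds.sub tendsto_id)
      simpa using this.mono_left nhdsWithin_le_nhds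
    · filter_upwards [self_mem_nhdsWithin] with h (hh : 0 < h)
      simp [sub_eq_self, ne_of_gt hh]
  have hslope := (hasDerivAt_iff_tendsto_slope.1 hw).comp hmap
  have heq : ∀ h : ℝ, 0 < h → slope w t₀ (t₀ - h) = (w t₀ - w (t₀ - h)) / h := by
    intro h hh
    rw [slope_def_field, show t₀ - h - t₀ = -h from by ring, div_neg, ← neg_div, neg_sub]
  have htend : Tendsto (fun h : ℝ => (w t₀ - w (t₀ - h)) / h) (nhdsWithin 0 (Set.Ioi 0))
      (nhds w') := by
    apply hslope.congr'
    filter_upwards [self_mem_nhdsWithin] with h hh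
    exact heq h hh
  have htendE : Tendsto (fun h : ℝ => (((w t₀ - w (t₀ - h)) / h : ℝ) : EReal))
      (nhdsWithin 0 (Set.Ioi 0)) (nhds (w' : EReal)) := EReal.tendsto_coe.2 htend
  rw [← htendE.limsup_eq]
  exact limsup_le_limsup (hle.mono fun h hh => EReal.coe_le_coe_iff.2 hh)

theorem stmt2 (C₁ C₂ : ℝ) (hC₁ : 0 < C₁) (hC₂ : 0 < C₂)
    (ψ Θ φ : ℝ → ℝ) (hψ : ∀ t, 0 ≤ t → 0 ≤ ψ t) (hΘ : ∀ t, 0 ≤ t → 0 ≤ Θ t)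
    (hφ : ∀ t, 0 ≤ t → 0 ≤ φ t) (hφc : ContinuousOn φ (Set.Ici 0)) (hφ0 : φ 0 = 0)
    (hD : ∀ t : ℝ, 0 < t →
      upperLeftDeriv φ t ≤
        ((C₁ * φ t + C₂ + (if φ t < ψ t then Θ t else 0) : ℝ) : EReal))
    (T : ℝ) (hT : 0 < T) (hψb : BddAbove (ψ '' Set.Icc 0 T)) :
    ∀ t ∈ Set.Icc (0 : ℝ) T,
      φ t ≤ (C₂ * T + sSup (ψ '' Set.Icc 0 T)) * Real.exp (C₁ * T) := by
  set M := sSup (ψ '' Set.Icc 0 T) with hM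
  have hM0 : 0 ≤ M := le_trans (hψ 0 le_rfl) (le_csSup hψb ⟨0, ⟨le_rfl, hT.le⟩, rfl⟩)
  have key : ∀ ε : ℝ, 0 < ε → ∀ t ∈ Set.Icc (0:ℝ) T,
      φ t < (C₂ * t + (M + ε)) * Real.exp (C₁ * t) := by
    intro ε hε
    set K := M + ε with hK
    set w : ℝ → ℝ := fun t => (C₂ * t + K) * Real.exp (C₁ * t) with hwdef
    by_contra hcon
    push_neg at hcon
    obtain ⟨t₁, ht₁, hwt₁⟩ := hcon
    set S := {t ∈ Set.Icc (0:ℝ) T | w t ≤ φ t} with hS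
    have hSbdd : BddBelow S := ⟨0, fun x hx => hx.1.1⟩
    have hSne : S.Nonempty := ⟨t₁, ht₁, hwt₁⟩
    have hwc : Continuous w := by fun_prop
    have hSclosed : IsClosed S := by
      have : S = Set.Icc 0 T ∩ (fun t => φ t - w t) ⁻¹' Set.Ici 0 := by
        ext x; simp only [hS, Set.mem_setOf_eq, Set.mem_inter_iff, Set.mem_preimage,
          Set.mem_Ici, sub_nonneg]
      rw [this]
      exact ContinuousOn.preimage_isClosed_of_isClosed
        ((hφc.mono Set.Icc_subset_Ici_self).sub hwc.continuousOn) isClosed_Icc isClosed_Ici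
    set t₀ := sInf S with ht₀
    have ht₀S : t₀ ∈ S := hSclosed.csInf_mem hSne hSbdd
    have ht₀Icc : t₀ ∈ Set.Icc (0:ℝ) T := ht₀S.1
    have hwφ : w t₀ ≤ φ t₀ := ht₀S.2
    have ht₀pos : 0 < t₀ := by
      rcases ht₀Icc.1.lt_or_eq with h | h
      · exact h
      · exfalso
        have hw0 : w 0 = K := by simp [hwdef]
        rw [← h, hφ0, hw0] at hwφ
        linarith
    have hmin : ∀ s, 0 ≤ s → s < t₀ → φ s < w s := by
      intro s hs0 hst
      by_contra hc
      push_neg at hc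
      have : s ∈ S := ⟨⟨hs0, hst.le.trans ht₀Icc.2⟩, hc⟩
      exact absurd (csInf_le hSbdd this) (not_le.2 hst)
    have hφw : φ t₀ = w t₀ := by
      refine le_antisymm ?_ hwφ
      have hne : (nhdsWithin t₀ (Set.Ico 0 t₀)).NeBot := by
        rw [← mem_closure_iff_nhdsWithin_neBot, closure_Ico (ne_of_lt ht₀pos)]
        exact ⟨ht₀Icc.1, le_rfl⟩
      have hφt : Tendsto φ (nhdsWithin t₀ (Set.Ico 0 t₀)) (nhds (φ t₀)) :=
        (hφc t₀ ht₀pos.le).mono_left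
          (nhdsWithin_mono _ (fun x hx => hx.1))
      have hcont : Tendsto (fun s => φ s - w s) (nhdsWithin t₀ (Set.Ico 0 t₀))
          (nhds (φ t₀ - w t₀)) := hφt.sub (hwc.continuousAt.continuousWithinAt)
      have hle0 : φ t₀ - w t₀ ≤ 0 :=
        le_of_tendsto hcont (by
          filter_upwards [self_mem_nhdsWithin] with s hs
          linarith [hmin s hs.1 hs.2])
      linarith
    have hexp1 : 1 < Real.exp (C₁ * t₀) := by
      have h := Real.exp_lt_exp.2 (show (0:ℝ) < C₁ * t₀ by positivity)
      simpa using h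
    have hKw : K ≤ w t₀ := by
      have h1 : (1:ℝ) ≤ Real.exp (C₁ * t₀) := hexp1.le
      have h2 : K ≤ C₂ * t₀ + K := by nlinarith
      calc K = K * 1 := by ring
        _ ≤ (C₂ * t₀ + K) * Real.exp (C₁ * t₀) := by
            apply mul_le_mul h2 h1 zero_le_one (by nlinarith)
    have hind : ¬ (φ t₀ < ψ t₀) := by
      push_neg
      have hψM : ψ t₀ ≤ M := le_csSup hψb ⟨t₀, ht₀Icc, rfl⟩
      rw [hφw]; linarith
    have hderiv : HasDerivAt w
        (C₂ * Real.exp (C₁ * t₀) + (C₂ * t₀ + K) * (Real.exp (C₁ * t₀) * C₁)) t₀ := by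
      have h1 : HasDerivAt (fun t : ℝ => C₂ * t + K) C₂ t₀ := by
        simpa using ((hasDerivAt_id t₀).const_mul C₂).add_const K
      have h2 : HasDerivAt (fun t : ℝ => Real.exp (C₁ * t)) (Real.exp (C₁ * t₀) * C₁) t₀ :=
        (Real.hasDerivAt_exp (C₁ * t₀)).comp t₀ (by simpa using (hasDerivAt_id t₀).const_mul C₁)
      exact h1.mul h2
    have hle : ∀ᶠ h in nhdsWithin (0:ℝ) (Set.Ioi 0),
        (w t₀ - w (t₀ - h)) / h ≤ (φ t₀ - φ (t₀ - h)) / h := by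
      filter_upwards [Ioo_mem_nhdsGT ht₀pos] with h hh
      have hlt := hmin (t₀ - h) (by linarith [hh.2]) (by linarith [hh.1])
      have hnum : w t₀ - w (t₀ - h) ≤ φ t₀ - φ (t₀ - h) := by
        rw [hφw]; linarith
      gcongr
      exact hh.1.le
    have hlow := limsup_lower_aux φ w t₀ _ hderiv hle
    have hup := hD t₀ ht₀pos
    rw [if_neg hind, add_zero] at hup
    have hcomb : ((C₂ * Real.exp (C₁ * t₀) + (C₂ * t₀ + K) * (Real.exp (C₁ * t₀) * C₁) : ℝ) : EReal)
        ≤ ((C₁ * φ t₀ + C₂ : ℝ) : EReal) := le_trans hlow hup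
    have hR : C₂ * Real.exp (C₁ * t₀) + (C₂ * t₀ + K) * (Real.exp (C₁ * t₀) * C₁)
        ≤ C₁ * φ t₀ + C₂ := by exact_mod_cast hcomb
    rw [hφw] at hR
    simp only [hwdef] at hR
    nlinarith [hR, hexp1, hC₂, mul_pos hC₂ (sub_pos.2 hexp1)]
  intro t ht
  have hexpT : (0:ℝ) < Real.exp (C₁ * T) := Real.exp_pos _
  refine le_of_forall_pos_le_add fun δ hδ => ?_
  have hε : 0 < δ / Real.exp (C₁ * T) := by positivity
  have h1 := (key _ hε t ht).le
  have h2 : (C₂ * t + (M + δ / Real.exp (C₁ * T))) * Real.exp (C₁ * t)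
      ≤ (C₂ * T + (M + δ / Real.exp (C₁ * T))) * Real.exp (C₁ * T) := by
    apply mul_le_mul
    · nlinarith [ht.1, ht.2]
    · exact Real.exp_le_exp.2 (by nlinarith [ht.2])
    · positivity
    · nlinarith [ht.2, hε]
  calc φ t ≤ (C₂ * T + (M + δ / Real.exp (C₁ * T))) * Real.exp (C₁ * T) := h1.trans h2
    _ = (C₂ * T + M) * Real.exp (C₁ * T) + δ := by
        field_simp
        ring
end

section
/- Let v : [0,T] × ℝ^d → ℝ be continuously differentiable in t, with v(t,·) ∈ C₀(ℝ^d) for each t (continuous functions vanishing at infinity). Fix t₀ ∈ (0,T] and let x₀ ∈ ℝ^d be a point where |v(t₀,x₀)| = sup_x |v(t₀,x)|. Then the upper-left-derivative of the map t ↦ sup_x |v(t,x)| at t₀ is bounded above by (∂v/∂t)(t₀,x₀) · sign(v(t₀,x₀)). -/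
open Filter

lemma sign_mul_self_eq_abs (a : ℝ) : Real.sign a * a = |a| := by
  rcases lt_trichotomy a 0 with h | h | h
  · rw [Real.sign_of_neg h, abs_of_neg h]; ring
  · simp [h]
  · rw [Real.sign_of_pos h, abs_of_pos h]; ring

lemma abs_sign_le_one (a : ℝ) : |Real.sign a| ≤ 1 := by
  rcases lt_trichotomy a 0 with h | h | h
  · rw [Real.sign_of_neg h]; norm_num
  · simp [h]
  · rw [Real.sign_of_pos h]; norm_num

theorem stmt3 (d : ℕ) (T t₀ : ℝ) (hT : 0 < T) (ht₀ : 0 < t₀) (ht₀T : t₀ ≤ T)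
    (v vt : ℝ → EuclideanSpace ℝ (Fin d) → ℝ)
    (hderiv : ∀ x, ∀ t ∈ Set.Icc 0 T, HasDerivAt (fun s => v s x) (vt t x) t)
    (hvtcont : Continuous fun p : ℝ × EuclideanSpace ℝ (Fin d) => vt p.1 p.2)
    (hC0cont : ∀ t ∈ Set.Icc (0 : ℝ) T, Continuous (v t))
    (hC0zero : ∀ t ∈ Set.Icc (0 : ℝ) T,
      Filter.Tendsto (v t) (Filter.cocompact (EuclideanSpace ℝ (Fin d))) (nhds 0))
    (x₀ : EuclideanSpace ℝ (Fin d))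
    (hx₀ : |v t₀ x₀| = ⨆ x, |v t₀ x|) :
    upperLeftDeriv (fun t => ⨆ x, |v t x|) t₀ ≤
      ((vt t₀ x₀ * Real.sign (v t₀ x₀) : ℝ) : EReal) := by
  set s : ℝ := Real.sign (v t₀ x₀) with hs_def
  -- boundedness of the range of |v t ·| for t ∈ [0,T]
  have bdd : ∀ t ∈ Set.Icc (0 : ℝ) T, BddAbove (Set.range fun x => |v t x|) := by
    intro t ht
    have h1 : (v t) ⁻¹' (Metric.ball 0 1) ∈ Filter.cocompact (EuclideanSpace ℝ (Fin d)) :=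
      (hC0zero t ht) (Metric.ball_mem_nhds 0 one_pos)
    rw [Filter.mem_cocompact] at h1
    obtain ⟨K, hK, hKsub⟩ := h1
    obtain ⟨C, hC⟩ := hK.exists_bound_of_continuousOn (hC0cont t ht).continuousOn
    refine ⟨max C 1, ?_⟩
    rintro y ⟨x, rfl⟩
    by_cases hx : x ∈ K
    · exact le_trans (by simpa using hC x hx) (le_max_left _ _)
    · have : v t x ∈ Metric.ball (0 : ℝ) 1 := hKsub hx
      simp only [Metric.mem_ball, Real.dist_eq, sub_zero] at this
      exact le_trans this.le (le_max_right _ _)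
  -- the comparison function
  set g : ℝ → ℝ := fun h => (s * v t₀ x₀ - s * v (t₀ - h) x₀) / h with hg_def
  have hle : (fun h : ℝ => ((((⨆ x, |v t₀ x|) - (⨆ x, |v (t₀ - h) x|)) / h : ℝ) : EReal))
      ≤ᶠ[nhdsWithin 0 (Set.Ioi 0)] fun h => ((g h : ℝ) : EReal) := by
    have hmem : Set.Ioo (0 : ℝ) t₀ ∈ nhdsWithin (0 : ℝ) (Set.Ioi 0) := by
      apply mem_nhdsWithin.2
      exact ⟨Set.Iio t₀, isOpen_Iio, ht₀, by
        intro y hy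
        exact ⟨hy.2, hy.1⟩⟩
    filter_upwards [hmem] with h hh
    have hh0 : 0 < h := hh.1
    have hht : h < t₀ := hh.2
    have hmem' : t₀ - h ∈ Set.Icc (0 : ℝ) T := ⟨by linarith, by linarith⟩
    have h1 : (⨆ x, |v t₀ x|) = s * v t₀ x₀ := by
      rw [← hx₀, hs_def, sign_mul_self_eq_abs]
    have h2 : s * v (t₀ - h) x₀ ≤ ⨆ x, |v (t₀ - h) x| := by
      have hb : s * v (t₀ - h) x₀ ≤ |v (t₀ - h) x₀| := by
        calc s * v (t₀ - h) x₀ ≤ |s * v (t₀ - h) x₀| := le_abs_self _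
          _ = |s| * |v (t₀ - h) x₀| := abs_mul _ _
          _ ≤ 1 * |v (t₀ - h) x₀| :=
            mul_le_mul_of_nonneg_right (abs_sign_le_one _) (abs_nonneg _)
          _ = |v (t₀ - h) x₀| := one_mul _
      exact le_trans hb (le_ciSup (bdd _ hmem') x₀)
    rw [EReal.coe_le_coe_iff]
    rw [hg_def, h1]
    rw [div_le_div_iff_of_pos_right hh0]
    linarith
  have hlimsup_le : upperLeftDeriv (fun t => ⨆ x, |v t x|) t₀ ≤
      Filter.limsup (fun h : ℝ => ((g h : ℝ) : EReal)) (nhdsWithin 0 (Set.Ioi 0)) := by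
    exact Filter.limsup_le_limsup hle
  refine le_trans hlimsup_le ?_
  -- now show the limsup of g equals s * vt t₀ x₀ = vt t₀ x₀ * s
  have hd := hderiv x₀ t₀ ⟨ht₀.le, ht₀T⟩
  rw [hasDerivAt_iff_tendsto_slope] at hd
  have hmap : Filter.Tendsto (fun h : ℝ => t₀ - h) (nhdsWithin 0 (Set.Ioi 0))
      (nhdsWithin t₀ {t₀}ᶜ) := by
    rw [tendsto_nhdsWithin_iff]
    constructor
    · have h1 : Filter.Tendsto (fun h : ℝ => t₀ - h) (nhds 0) (nhds t₀) := by
        simpa using (continuous_sub_left t₀).tendsto (0 : ℝ)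
      exact h1.mono_left nhdsWithin_le_nhds
    · filter_upwards [self_mem_nhdsWithin] with h hh
      simp only [Set.mem_compl_iff, Set.mem_singleton_iff]
      intro hc
      have h0 : h = 0 := by linarith [sub_eq_self.mp hc]
      exact absurd h0 (ne_of_gt hh)
  have hq : Filter.Tendsto (fun h : ℝ => (v t₀ x₀ - v (t₀ - h) x₀) / h)
      (nhdsWithin 0 (Set.Ioi 0)) (nhds (vt t₀ x₀)) := by
    have := hd.comp hmap
    refine this.congr fun h => ?_
    show slope (fun s => v s x₀) t₀ (t₀ - h) = _
    rw [slope_def_field]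
    rw [show t₀ - h - t₀ = -h by ring, div_neg, ← neg_div, neg_sub]
  have hg : Filter.Tendsto g (nhdsWithin 0 (Set.Ioi 0)) (nhds (s * vt t₀ x₀)) := by
    refine (hq.const_mul s).congr fun h => ?_
    rw [hg_def]
    ring
  have hgE : Filter.Tendsto (fun h : ℝ => ((g h : ℝ) : EReal)) (nhdsWithin 0 (Set.Ioi 0))
      (nhds ((s * vt t₀ x₀ : ℝ) : EReal)) := by
    exact (EReal.tendsto_coe).2 hg
  rw [hgE.limsup_eq]
  rw [EReal.coe_le_coe_iff]
  rw [mul_comm]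
end

section
/- Let f satisfy the one-sided Lipschitz condition f(u₂) - f(u₁) ≤ κ(u₂-u₁) for u₁ < u₂, set φ(u) = f(u) - κu (non-increasing), and define f_n(u) = φ_n(u) + κu where φ_n are the Yosida approximations of φ. Then each f_n is Lipschitz with constant 2n + |κ|, each f_n satisfies the same one-sided Lipschitz condition f_n(u₂) - f_n(u₁) ≤ κ(u₂-u₁) for u₁ < u₂, f_n(u) → f(u) pointwise, and |f_n(u)| ≤ |f(u)| + 2|κ||u| for all u. -/
theorem stmt17 (f : ℝ → ℝ) (κ : ℝ) (hf : Continuous f)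
    (hone : ∀ u₁ u₂ : ℝ, u₁ < u₂ → f u₂ - f u₁ ≤ κ * (u₂ - u₁))
    (φn : ℕ → ℝ → ℝ)
    (hlip : ∀ (n : ℕ) (u₁ u₂ : ℝ), |φn n u₂ - φn n u₁| ≤ 2 * n * |u₂ - u₁|)
    (hanti : ∀ n : ℕ, Antitone (φn n))
    (hlim : ∀ u : ℝ, Filter.Tendsto (fun n : ℕ => φn n u) Filter.atTop
      (nhds (f u - κ * u)))
    (hbd : ∀ (n : ℕ) (u : ℝ), |φn n u| ≤ |f u - κ * u|)
    (fn : ℕ → ℝ → ℝ) (hfn : ∀ (n : ℕ) (u : ℝ), fn n u = φn n u + κ * u) :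
    (∀ (n : ℕ) (u₁ u₂ : ℝ), |fn n u₁ - fn n u₂| ≤ (2 * n + |κ|) * |u₁ - u₂|) ∧
    (∀ (n : ℕ) (u₁ u₂ : ℝ), u₁ < u₂ → fn n u₂ - fn n u₁ ≤ κ * (u₂ - u₁)) ∧
    (∀ u : ℝ, Filter.Tendsto (fun n : ℕ => fn n u) Filter.atTop (nhds (f u))) ∧
    (∀ (n : ℕ) (u : ℝ), |fn n u| ≤ |f u| + 2 * |κ| * |u|) := by
  refine ⟨?_, ?_, ?_, ?_⟩
  · intro n u₁ u₂
    have h1 := hlip n u₂ u₁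
    have h2 : |κ * (u₁ - u₂)| = |κ| * |u₁ - u₂| := abs_mul _ _
    calc |fn n u₁ - fn n u₂| = |(φn n u₁ - φn n u₂) + κ * (u₁ - u₂)| := by
          rw [hfn, hfn]; ring_nf
      _ ≤ |φn n u₁ - φn n u₂| + |κ * (u₁ - u₂)| := abs_add_le _ _
      _ ≤ 2 * n * |u₁ - u₂| + |κ| * |u₁ - u₂| := by rw [h2]; gcongr
      _ = (2 * n + |κ|) * |u₁ - u₂| := by ring
  · intro n u₁ u₂ h
    have := hanti n h.le
    rw [hfn, hfn]
    nlinarith [this]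
  · intro u
    have := (hlim u).add_const (κ * u)
    simpa [hfn, sub_add_cancel] using this
  · intro n u
    calc |fn n u| ≤ |φn n u| + |κ * u| := by rw [hfn]; exact abs_add_le _ _
      _ ≤ |f u - κ * u| + |κ * u| := add_le_add (hbd n u) le_rfl
      _ ≤ (|f u| + |κ * u|) + |κ * u| := add_le_add (abs_sub _ _) le_rfl
      _ = |f u| + 2 * |κ| * |u| := by rw [abs_mul]; ring
end
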